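/- Let X be a nonempty set, Ψ a nonempty set of functions g : X → ℝ, ε > 0, 0 < ρ ≤ 1, λ ≥ 0, and suppose d ∈ ℕ is such that every ε-independent sequence for Ψ has length at most d. Then for any x_1,…,x_n ∈ X and any g_1,…,g_n ∈ Ψ, the set { i ∈ {1,…,n} : ε < |g_i(x_i)| ≤ 2ε and |g_i(x_i)| ≥ (ρ/2)·(λ + ∑_{t=1}^{i−1} |g_i(x_t)|) } has cardinality at most 5·d/ρ. (Peeling bound from the proof of the self-normalized sum lemma.) -/

import Mathlib

open Finset

/-- A finite sequence `a : Fin m → X` is `ε`-independent for `Ψ` if for every index `i`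
there is `g ∈ Ψ` with `∑_{j<i} |g (a j)| ≤ ε` and `|g (a i)| > ε`. -/
def IsEpsIndep {X : Type*} (Ψ : Set (X → ℝ)) (ε : ℝ) {m : ℕ} (a : Fin m → X) : Prop :=
  ∀ i : Fin m, ∃ g ∈ Ψ, (∑ j ∈ Finset.Iio i, |g (a j)|) ≤ ε ∧ ε < |g (a i)|

attribute [local instance] Classical.propDecidable


theorem passFn_exists (v : ℕ → ℕ → ℝ) (ε : ℝ) (hε : 0 < ε) (k : ℕ) (S : ℕ → Prop) (p : ℕ → ℕ) :
    ∃ c, (∑ j ∈ (Finset.range k).filter fun j => S j ∧ p j = c, v k j) ≤ ε := by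
  refine ⟨((Finset.range k).sup p) + 1, ?_⟩
  have h0 : (Finset.range k).filter (fun j => S j ∧ p j = ((Finset.range k).sup p) + 1) = ∅ := by
    refine Finset.filter_false_of_mem ?_
    intro j hj hc
    have h2 := Finset.le_sup (f := p) hj
    omega
  rw [h0, Finset.sum_empty]
  exact hε.le

noncomputable def passFn (v : ℕ → ℕ → ℝ) (S : ℕ → Prop) (ε : ℝ) (hε : 0 < ε) (k : ℕ) : ℕ :=
  Nat.find (passFn_exists v ε hε k S (fun j => if h : j < k then passFn v S ε hε j else 0))
termination_by k
decreasing_by all_goals assumption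

theorem passFn_key (v : ℕ → ℕ → ℝ) (S : ℕ → Prop) (ε : ℝ) (hε : 0 < ε) (k c : ℕ) :
    ((Finset.range k).filter fun j =>
        S j ∧ (if h : j < k then passFn v S ε hε j else 0) = c) =
      ((Finset.range k).filter fun j => S j ∧ passFn v S ε hε j = c) := by
  apply Finset.filter_congr
  intro j hj
  simp [Finset.mem_range.mp hj]

theorem passFn_spec (v : ℕ → ℕ → ℝ) (S : ℕ → Prop) (ε : ℝ) (hε : 0 < ε) (k : ℕ) :
    (∑ j ∈ (Finset.range k).filter fun j =>
        S j ∧ passFn v S ε hε j = passFn v S ε hε k, v k j) ≤ ε := by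
  rw [← passFn_key v S ε hε k]
  conv_lhs => rw [passFn]
  exact Nat.find_spec (passFn_exists v ε hε k S (fun j => if h : j < k then passFn v S ε hε j else 0))

theorem passFn_min (v : ℕ → ℕ → ℝ) (S : ℕ → Prop) (ε : ℝ) (hε : 0 < ε) (k c : ℕ)
    (hc : c < passFn v S ε hε k) :
    ε < ∑ j ∈ (Finset.range k).filter fun j => S j ∧ passFn v S ε hε j = c, v k j := by
  by_contra h
  push_neg at h
  have hle : passFn v S ε hε k ≤ c := by
    rw [passFn]
    apply Nat.find_le
    rw [passFn_key v S ε hε k c]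
    exact h
  omega

theorem sum_Iio_fin {n : ℕ} (i : Fin n) (f : Fin n → ℝ) (v : ℕ → ℝ)
    (hv : ∀ (j) (hj : j < n), v j = f ⟨j, hj⟩) :
    ∑ t ∈ Finset.Iio i, f t = ∑ j ∈ Finset.range i.val, v j := by
  refine Finset.sum_bij' (fun t _ => t.val) (fun j hj => ⟨j, lt_trans (Finset.mem_range.mp hj) i.isLt⟩) ?_ ?_ ?_ ?_ ?_
  · intro t ht
    simpa using Finset.mem_Iio.mp ht
  · intro j hj
    simpa [Fin.lt_iff_val_lt_val] using Finset.mem_range.mp hj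
  · intro t ht
    rfl
  · intro j hj
    rfl
  · intro t ht
    exact (hv t.val t.isLt).symm


/-- peeling bound from the proof of the self-normalized sum lemma. -/
theorem peeling_bound {X : Type*} [Nonempty X]
    (Ψ : Set (X → ℝ)) (hΨne : Ψ.Nonempty)
    (ε : ℝ) (hε : 0 < ε) (ρ : ℝ) (hρ0 : 0 < ρ) (hρ1 : ρ ≤ 1) (lam : ℝ) (hlam : 0 ≤ lam)
    (d : ℕ) (hd : ∀ m : ℕ, ∀ a : Fin m → X, IsEpsIndep Ψ ε a → m ≤ d)
    (n : ℕ) (x : Fin n → X) (g : Fin n → X → ℝ) (hg : ∀ i, g i ∈ Ψ) :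
    (({i : Fin n | (ε < |g i (x i)| ∧ |g i (x i)| ≤ 2 * ε) ∧
        (ρ / 2) * (lam + ∑ t ∈ Finset.Iio i, |g i (x t)|) ≤ |g i (x i)|}.ncard : ℝ)) ≤
      5 * d / ρ := by
  set P : Fin n → Prop := fun i => (ε < |g i (x i)| ∧ |g i (x i)| ≤ 2 * ε) ∧
      (ρ / 2) * (lam + ∑ t ∈ Finset.Iio i, |g i (x t)|) ≤ |g i (x i)| with hP
  set T : Finset (Fin n) := Finset.univ.filter P with hT
  have hset : {i : Fin n | P i} = ↑T := by
    ext i; simp [hT]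
  rw [hset, Set.ncard_coe_finset]
  -- weights and index-set predicates on ℕ
  set v : ℕ → ℕ → ℝ := fun k j =>
    if hk : k < n then if hj : j < n then |g ⟨k, hk⟩ (x ⟨j, hj⟩)| else 0 else 0 with hv
  set S : ℕ → Prop := fun k => ∃ hk : k < n, (⟨k, hk⟩ : Fin n) ∈ T with hS
  set pass : ℕ → ℕ := passFn v S ε hε with hpass
  have hv_eval : ∀ (i : Fin n) (j : ℕ) (hj : j < n), v i.val j = |g i (x ⟨j, hj⟩)| := by
    intro i j hj
    simp [hv, i.isLt, hj]
  have hv_nonneg : ∀ k j, 0 ≤ v k j := by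
    intro k j
    simp only [hv]
    split <;> try positivity
    split <;> positivity
  -- the sum over Iio i equals the range sum of v
  have hsum_eq : ∀ i : Fin n,
      ∑ t ∈ Finset.Iio i, |g i (x t)| = ∑ j ∈ Finset.range i.val, v i.val j := by
    intro i
    exact sum_Iio_fin i (fun t => |g i (x t)|) (v i.val)
      (fun j hj => hv_eval i j hj)
  set K : ℕ := Nat.floor (4 / ρ) + 1 with hK
  -- step: every member of T has small pass number
  have hpass_lt : ∀ i ∈ T, pass i.val < K := by
    intro i hiT
    have hPi : P i := (Finset.mem_filter.mp hiT).2
    -- total sum bound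
    have hSig : ∑ t ∈ Finset.Iio i, |g i (x t)| ≤ 4 * ε / ρ := by
      have h1 : (ρ / 2) * (lam + ∑ t ∈ Finset.Iio i, |g i (x t)|) ≤ 2 * ε :=
        le_trans hPi.2 hPi.1.2
      have h2 : lam + ∑ t ∈ Finset.Iio i, |g i (x t)| ≤ 4 * ε / ρ := by
        rw [div_mul_eq_mul_div, le_div_iff₀ hρ0] at *
        nlinarith
      linarith
    -- each class below pass i.val contributes > ε
    have hcount : (pass i.val : ℝ) * ε ≤ ∑ j ∈ Finset.range i.val, v i.val j := by
      have hdisj : ∀ c₁ ∈ Finset.range (pass i.val), ∀ c₂ ∈ Finset.range (pass i.val),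
          c₁ ≠ c₂ → Disjoint ((Finset.range i.val).filter fun j => S j ∧ pass j = c₁)
            ((Finset.range i.val).filter fun j => S j ∧ pass j = c₂) := by
        intro c₁ _ c₂ _ hne
        refine Finset.disjoint_left.mpr ?_
        intro j hj₁ hj₂
        exact hne ((Finset.mem_filter.mp hj₁).2.2 ▸ (Finset.mem_filter.mp hj₂).2.2 ▸ rfl)
      calc (pass i.val : ℝ) * ε
          = ∑ c ∈ Finset.range (pass i.val), ε := by
            rw [Finset.sum_const, Finset.card_range, nsmul_eq_mul]
        _ ≤ ∑ c ∈ Finset.range (pass i.val),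
              ∑ j ∈ (Finset.range i.val).filter fun j => S j ∧ pass j = c, v i.val j := by
            refine Finset.sum_le_sum ?_
            intro c hc
            have h5 := (passFn_min v S ε hε i.val c (Finset.mem_range.mp hc)).le
            convert h5 using 3
        _ = ∑ j ∈ (Finset.range (pass i.val)).biUnion
              (fun c => (Finset.range i.val).filter fun j => S j ∧ pass j = c), v i.val j := by
            rw [Finset.sum_biUnion]
            exact fun c₁ h₁ c₂ h₂ hne => hdisj c₁ h₁ c₂ h₂ hne
        _ ≤ ∑ j ∈ Finset.range i.val, v i.val j := by
            refine Finset.sum_le_sum_of_subset_of_nonneg ?_ (fun j _ _ => hv_nonneg _ _)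
            intro j hj
            obtain ⟨c, _, hjc⟩ := Finset.mem_biUnion.mp hj
            exact (Finset.mem_filter.mp hjc).1
    have hple : (pass i.val : ℝ) ≤ 4 / ρ := by
      rw [← hsum_eq] at hcount
      have : (pass i.val : ℝ) * ε ≤ 4 * ε / ρ := le_trans hcount hSig
      rw [le_div_iff₀ hρ0]
      rw [le_div_iff₀ hρ0] at this
      nlinarith [hε]
    have : pass i.val ≤ Nat.floor (4 / ρ) := Nat.le_floor hple
    omega
  -- step: each class has at most d elements
  have hclass : ∀ c : ℕ, (T.filter fun i => pass i.val = c).card ≤ d := by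
    intro c
    set C : Finset (Fin n) := T.filter fun i => pass i.val = c with hC
    set m : ℕ := C.card with hm
    set e : Fin m ≃o {y // y ∈ C} := C.orderIsoOfFin rfl with he
    refine hd m (fun r => x ((e r : Fin n))) ?_
    intro r
    set i : Fin n := (e r : Fin n) with hi
    have hiC : i ∈ C := (e r).2
    have hiT : i ∈ T := (Finset.mem_filter.mp hiC).1
    have hic : pass i.val = c := (Finset.mem_filter.mp hiC).2
    have hPi : P i := (Finset.mem_filter.mp hiT).2
    refine ⟨g i, hg i, ?_, hPi.1.1⟩
    -- sum over earlier chosen elements ≤ ε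
    have himage : (Finset.Iio r).image (fun s => ((e s : Fin n)).val) ⊆
        (Finset.range i.val).filter fun j => S j ∧ pass j = c := by
      intro j hj
      obtain ⟨s, hs, rfl⟩ := Finset.mem_image.mp hj
      have hlt : (e s : Fin n) < i := by
        have := e.strictMono (Finset.mem_Iio.mp hs)
        exact_mod_cast this
      have hmem : (e s : Fin n) ∈ C := (e s).2
      refine Finset.mem_filter.mpr ⟨Finset.mem_range.mpr hlt, ?_, (Finset.mem_filter.mp hmem).2⟩
      exact ⟨(e s : Fin n).isLt, by simpa using (Finset.mem_filter.mp hmem).1⟩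
    calc ∑ s ∈ Finset.Iio r, |g i (x ((e s : Fin n)))|
        = ∑ j ∈ (Finset.Iio r).image (fun s => ((e s : Fin n)).val), v i.val j := by
          rw [Finset.sum_image]
          · refine Finset.sum_congr rfl ?_
            intro s _
            rw [hv_eval i _ (e s : Fin n).isLt]
          · intro s₁ _ s₂ _ hss
            have : (e s₁ : Fin n) = (e s₂ : Fin n) := Fin.val_injective hss
            have := Subtype.coe_injective this
            exact e.injective this
      _ ≤ ∑ j ∈ (Finset.range i.val).filter fun j => S j ∧ pass j = c, v i.val j := by
          exact Finset.sum_le_sum_of_subset_of_nonneg himage (fun j _ _ => hv_nonneg _ _)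
      _ ≤ ε := by
          rw [← hic]
          have h6 := passFn_spec v S ε hε i.val
          convert h6 using 3
  -- combine
  have hsub : T ⊆ (Finset.range K).biUnion fun c => T.filter fun i => pass i.val = c := by
    intro i hi
    exact Finset.mem_biUnion.mpr ⟨pass i.val, Finset.mem_range.mpr (hpass_lt i hi), 
      Finset.mem_filter.mpr ⟨hi, rfl⟩⟩
  have hcard : T.card ≤ K * d := by
    calc T.card ≤ ((Finset.range K).biUnion fun c => T.filter fun i => pass i.val = c).card :=
          Finset.card_le_card hsub
      _ ≤ ∑ c ∈ Finset.range K, (T.filter fun i => pass i.val = c).card :=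
          Finset.card_biUnion_le
      _ ≤ ∑ c ∈ Finset.range K, d := Finset.sum_le_sum fun c _ => hclass c
      _ = K * d := by rw [Finset.sum_const, Finset.card_range, smul_eq_mul]
  have hKle : (K : ℝ) ≤ 5 / ρ := by
    have h1 : (K : ℝ) ≤ 4 / ρ + 1 := by
      rw [hK]
      push_cast
      have := Nat.floor_le (by positivity : (0:ℝ) ≤ 4 / ρ)
      linarith
    have h2 : (1 : ℝ) ≤ 1 / ρ := by
      rw [le_div_iff₀ hρ0]; linarith
    have : 4 / ρ + 1 ≤ 4 / ρ + 1 / ρ := by linarith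
    calc (K : ℝ) ≤ 4 / ρ + 1 := h1
      _ ≤ 4 / ρ + 1 / ρ := this
      _ = 5 / ρ := by ring
  calc (T.card : ℝ) ≤ (K * d : ℕ) := by exact_mod_cast hcard
    _ = (K : ℝ) * d := by push_cast; ring
    _ ≤ (5 / ρ) * d := by
        apply mul_le_mul_of_nonneg_right hKle (by positivity)
    _ = 5 * d / ρ := by ring
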